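/- Let L ≥ 5 be odd and m = (L+3)/2, and let C be the explicit L×m intertwiner cell matrix between the graphs A_L and D_m. Then the symmetry operator on the D side satisfies Cᵀ*C = 1 + R_D, where 1 is the m×m identity matrix and R_D is the permutation matrix of the height reversal of D_m which fixes 1,…,m−2 and interchanges m−1 and m. -/
import Mathlib


open Matrix

/-- Adjacency matrix of the graph `A_L`, with vertices `1,…,L` encoded as `Fin L`
(vertex `a` is `a+1` in 1-based labelling): `A_{a,a'} = 1` iff `|a − a'| = 1`. -/
def adjA (L : ℕ) : Matrix (Fin L) (Fin L) ℤ := fun a a' =>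
  if (a : ℕ) + 1 = (a' : ℕ) ∨ (a' : ℕ) + 1 = (a : ℕ) then 1 else 0

/-- Adjacency matrix of the graph `D_m`, with vertices `1,…,m` encoded as `Fin m`.
In 1-based labels the edges are `{b,b+1}` for `1 ≤ b ≤ m−3`, `{m−2,m−1}` and
`{m−2,m}`; i.e. all consecutive pairs except `{m−1,m}`, plus the pair `{m−2,m}`.
In the 0-based encoding, `b` and `b'` are adjacent iff they are consecutive with
`b + b' + 3 ≠ 2m` (excluding the 1-based pair `{m−1,m}`), or differ by 2 with
`b + b' + 4 = 2m` (the 1-based pair `{m−2,m}`). -/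
def adjD (m : ℕ) : Matrix (Fin m) (Fin m) ℤ := fun b b' =>
  if ((b : ℕ) + 1 = (b' : ℕ) ∨ (b' : ℕ) + 1 = (b : ℕ)) ∧ (b : ℕ) + (b' : ℕ) + 3 ≠ 2 * m then 1
  else if ((b : ℕ) + 2 = (b' : ℕ) ∨ (b' : ℕ) + 2 = (b : ℕ)) ∧ (b : ℕ) + (b' : ℕ) + 4 = 2 * m then 1
  else 0

/-- The explicit `L×m` intertwiner cell matrix between `A_L` and `D_m`
(for odd `L` and `m = (L+3)/2`).  In 1-based labels:
`C_{a,b} = δ_{a,b} + δ_{a,L+1−b}` for `1 ≤ b ≤ m−2`, and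
`C_{a,m−1} = C_{a,m} = δ_{a,(L+1)/2}`.  In the 0-based encoding, for
`b + 3 ≤ m` the entry is `δ_{a,b} + δ_{a+b+1,L}`, and otherwise it is
`δ_{a+1,(L+1)/2}`. -/
def interC (L m : ℕ) : Matrix (Fin L) (Fin m) ℤ := fun a b =>
  if (b : ℕ) + 3 ≤ m then
    (if (a : ℕ) = (b : ℕ) then 1 else 0) + (if (a : ℕ) + (b : ℕ) + 1 = L then 1 else 0)
  else
    if (a : ℕ) + 1 = (L + 1) / 2 then 1 else 0

/-- Permutation matrix of the height reversal `a ↦ L+1−a` of `A_L`: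
`(R_A)_{a,a'} = δ_{a',L+1−a}`, i.e. in the 0-based encoding `a + a' + 1 = L`. -/
def heightRevA (L : ℕ) : Matrix (Fin L) (Fin L) ℤ := fun a a' =>
  if (a : ℕ) + (a' : ℕ) + 1 = L then 1 else 0

/-- Permutation matrix of the height reversal of `D_m`, fixing `1,…,m−2` and
interchanging `m−1` with `m`.  In the 0-based encoding, `b` with `b + 3 ≤ m` is
fixed, and otherwise `b` is sent to the `b'` with `b + b' + 3 = 2m`. -/
def heightRevD (m : ℕ) : Matrix (Fin m) (Fin m) ℤ := fun b b' =>
  if (b : ℕ) + 3 ≤ m then (if b = b' then 1 else 0)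
  else (if (b : ℕ) + (b' : ℕ) + 3 = 2 * m then 1 else 0)

/-- For odd `L ≥ 5` and `m = (L+3)/2`, the symmetry operator on the `D` side is
`Cᵀ*C = 1 + R_D`, where `R_D` is the height-reversal permutation matrix of `D_m`. -/
lemma sum_delta (L i j : ℕ) (hi : i < L) :
    ∑ a : Fin L, (if (a : ℕ) = i then (1:ℤ) else 0) * (if (a : ℕ) = j then 1 else 0)
      = if i = j then 1 else 0 := by
  rw [Finset.sum_eq_single (⟨i, hi⟩ : Fin L)]
  · simp
  · intro a _ ha
    have : (a : ℕ) ≠ i := fun h => ha (Fin.ext h)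
    simp [this]
  · simp

theorem cell_symmetry_operator_D (L : ℕ) (hL : 5 ≤ L) (hodd : Odd L)
    (m : ℕ) (hm : m = (L + 3) / 2) :
    (interC L m)ᵀ * interC L m = 1 + heightRevD m := by
  obtain ⟨k, rfl⟩ := hodd
  have hk : 2 ≤ k := by omega
  have hm2 : m = k + 2 := by omega
  subst hm2
  ext b b'
  have hb := b.isLt
  have hb' := b'.isLt
  rw [Matrix.mul_apply]
  simp only [transpose_apply, interC, heightRevD, Matrix.add_apply, Matrix.one_apply]
  by_cases h1 : (b : ℕ) + 3 ≤ k + 2 <;> by_cases h2 : (b' : ℕ) + 3 ≤ k + 2 <;>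
    simp only [h1, h2, if_true, if_false]
  · have e1 : ∀ a : ℕ, (a + (b : ℕ) + 1 = 2 * k + 1) = (a = 2 * k - (b : ℕ)) := by
      intro a; apply propext; omega
    have e2 : ∀ a : ℕ, (a + (b' : ℕ) + 1 = 2 * k + 1) = (a = 2 * k - (b' : ℕ)) := by
      intro a; apply propext; omega
    simp only [e1, e2, add_mul, mul_add, Finset.sum_add_distrib]
    rw [sum_delta _ _ _ (by omega), sum_delta _ _ _ (by omega),
      sum_delta _ _ _ (by omega), sum_delta _ _ _ (by omega)]
    simp only [Fin.ext_iff]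
    split_ifs <;> omega
  · have e3 : ∀ a : ℕ, (a + 1 = (2 * k + 1 + 1) / 2) = (a = k) := by
      intro a; apply propext; omega
    have e1 : ∀ a : ℕ, (a + (b : ℕ) + 1 = 2 * k + 1) = (a = 2 * k - (b : ℕ)) := by
      intro a; apply propext; omega
    simp only [e1, e3, add_mul, Finset.sum_add_distrib]
    rw [sum_delta _ _ _ (by omega), sum_delta _ _ _ (by omega)]
    simp only [Fin.ext_iff]
    split_ifs <;> omega
  · have e3 : ∀ a : ℕ, (a + 1 = (2 * k + 1 + 1) / 2) = (a = k) := by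
      intro a; apply propext; omega
    have e2 : ∀ a : ℕ, (a + (b' : ℕ) + 1 = 2 * k + 1) = (a = 2 * k - (b' : ℕ)) := by
      intro a; apply propext; omega
    simp only [e2, e3, mul_add, Finset.sum_add_distrib]
    rw [sum_delta _ _ _ (by omega), sum_delta _ _ _ (by omega)]
    simp only [Fin.ext_iff]
    split_ifs <;> omega
  · have e3 : ∀ a : ℕ, (a + 1 = (2 * k + 1 + 1) / 2) = (a = k) := by
      intro a; apply propext; omega
    simp only [e3]
    rw [sum_delta _ _ _ (by omega)]
    simp only [Fin.ext_iff]
    split_ifs <;> omega
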